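/- Let Ω be a set of (r+δ−1)-dimensional subspaces of F_q^M whose minimum subspace distance is at least 2δ. Let V ∈ Ω and let X ∈ F_q^{(r+δ−1)×M} be a matrix of rank r+δ−1 whose rows span V. Let A ∈ F_q^{N×(r+δ−1)} with rank(A) ≥ r+δ−1−ρ, let Z ∈ F_q^{ℓ×M} be a matrix with at most t nonzero rows, let B ∈ F_q^{N×ℓ}, and set Y = AX + BZ. If 2t + ρ ≤ δ − 1, then the minimum subspace distance decoder recovers V: for every V' ∈ Ω with V' ≠ V, d_S(row space of Y, V) < d_S(row space of Y, V'). -/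

import Mathlib

open scoped Classical

/-- The subspace distance `d_S(U,V) = dim U + dim V - 2 dim (U ⊓ W)`. -/
noncomputable def subspaceDist {Fq V : Type*} [Field Fq] [AddCommGroup V] [Module Fq V]
    (U W : Submodule Fq V) : ℕ :=
  Module.finrank Fq U + Module.finrank Fq W - 2 * Module.finrank Fq (U ⊓ W : Submodule Fq V)

/-- The row space of a matrix: the span of its rows. -/
noncomputable def rowSpace {Fq : Type*} [Field Fq] {a M : ℕ}
    (X : Matrix (Fin a) (Fin M) Fq) : Submodule Fq (Fin M → Fq) :=
  Submodule.span Fq (Set.range X)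

lemma rowSpace_eq_range {Fq : Type*} [Field Fq] {a M : ℕ}
    (X : Matrix (Fin a) (Fin M) Fq) :
    rowSpace X = LinearMap.range X.vecMulLinear := by
  rw [rowSpace, range_vecMulLinear]
  rfl

lemma rowSpace_mul_le {Fq : Type*} [Field Fq] {a b M : ℕ}
    (A : Matrix (Fin a) (Fin b) Fq) (X : Matrix (Fin b) (Fin M) Fq) :
    rowSpace (A * X) ≤ rowSpace X := by
  rw [rowSpace_eq_range, rowSpace_eq_range]
  rintro - ⟨v, rfl⟩
  exact ⟨Matrix.vecMul v A, by simp [Matrix.vecMul_vecMul]⟩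

/-- If `P ≤ Q ⊔ R` then `dim P ≤ dim (P ⊓ Q) + dim R`. -/
lemma finrank_le_of_le_sup {Fq V : Type*} [Field Fq] [AddCommGroup V] [Module Fq V]
    [FiniteDimensional Fq V] {P Q R : Submodule Fq V} (h : P ≤ Q ⊔ R) :
    Module.finrank Fq P ≤ Module.finrank Fq (P ⊓ Q : Submodule Fq V) + Module.finrank Fq R := by
  have h1 := Submodule.finrank_sup_add_finrank_inf_eq P Q
  have h2 : Module.finrank Fq (P ⊔ Q : Submodule Fq V)
      ≤ Module.finrank Fq (Q ⊔ R : Submodule Fq V) :=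
    Submodule.finrank_mono (sup_le (le_trans h le_rfl) le_sup_left)
  have h3 := Submodule.finrank_sup_add_finrank_inf_eq Q R
  have h4 : Module.finrank Fq (Q ⊓ R : Submodule Fq V) ≤ Module.finrank Fq R :=
    Submodule.finrank_mono inf_le_right
  omega

theorem min_subspace_distance_decoding
    (q M N ℓ r δ t ρ : ℕ) (hq : IsPrimePow q) (hr : 0 < r) (hδ : 0 < δ)
    (Fq : Type*) [Field Fq] [Fintype Fq] (hcard : Fintype.card Fq = q)
    (Ω : Set (Submodule Fq (Fin M → Fq)))
    (hdim : ∀ U ∈ Ω, Module.finrank Fq U = r + δ - 1)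
    (hdist : ∀ U ∈ Ω, ∀ W ∈ Ω, U ≠ W → 2 * δ ≤ subspaceDist U W)
    (V : Submodule Fq (Fin M → Fq)) (hV : V ∈ Ω)
    (X : Matrix (Fin (r + δ - 1)) (Fin M) Fq)
    (hXrank : X.rank = r + δ - 1) (hXspan : rowSpace X = V)
    (A : Matrix (Fin N) (Fin (r + δ - 1)) Fq) (hA : r + δ - 1 - ρ ≤ A.rank)
    (Z : Matrix (Fin ℓ) (Fin M) Fq)
    (hZ : (Finset.univ.filter (fun i : Fin ℓ => Z i ≠ 0)).card ≤ t)
    (B : Matrix (Fin N) (Fin ℓ) Fq)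
    (Y : Matrix (Fin N) (Fin M) Fq) (hY : Y = A * X + B * Z)
    (hcond : 2 * t + ρ ≤ δ - 1) :
    ∀ V' ∈ Ω, V' ≠ V →
      subspaceDist (rowSpace Y) V < subspaceDist (rowSpace Y) V' := by
  intro V' hV' hne
  set U := rowSpace Y with hU
  set S := rowSpace (A * X) with hS
  set W0 := rowSpace (B * Z) with hW0
  -- dim W0 ≤ t
  have hW0t : Module.finrank Fq W0 ≤ t := by
    have hle : W0 ≤ Submodule.span Fq
        ((Finset.univ.filter (fun i : Fin ℓ => Z i ≠ 0)).image Z : Set (Fin M → Fq)) := by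
      refine le_trans (rowSpace_mul_le B Z) (Submodule.span_le.2 ?_)
      rintro - ⟨i, rfl⟩
      by_cases hzi : Z i = 0
      · rw [hzi]; exact Submodule.zero_mem _
      · exact Submodule.subset_span (Finset.mem_coe.mpr (Finset.mem_image_of_mem Z (by simp [hzi])))
    calc Module.finrank Fq W0
        ≤ Module.finrank Fq (Submodule.span Fq
          ((Finset.univ.filter (fun i : Fin ℓ => Z i ≠ 0)).image Z : Set (Fin M → Fq))) :=
          Submodule.finrank_mono hle
      _ ≤ ((Finset.univ.filter (fun i : Fin ℓ => Z i ≠ 0)).image Z).card :=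
          finrank_span_finset_le_card _
      _ ≤ (Finset.univ.filter (fun i : Fin ℓ => Z i ≠ 0)).card := Finset.card_image_le
      _ ≤ t := hZ
  -- S ≤ V
  have hSV : S ≤ V := hXspan ▸ rowSpace_mul_le A X
  -- dim S = rank A ≥ n - ρ
  have hXinj : Function.Injective X.vecMulLinear := by
    rw [← LinearMap.ker_eq_bot]
    have hrn := X.vecMulLinear.finrank_range_add_finrank_ker
    rw [← rowSpace_eq_range, hXspan, hdim V hV] at hrn
    have hdom : Module.finrank Fq (Fin (r + δ - 1) → Fq) = r + δ - 1 := by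
      simp [Module.finrank_pi]
    rw [hdom] at hrn
    have : Module.finrank Fq (LinearMap.ker X.vecMulLinear) = 0 := by omega
    exact Submodule.finrank_eq_zero.mp this
  have hSrank : r + δ - 1 - ρ ≤ Module.finrank Fq S := by
    have hcomp : (A * X).vecMulLinear = X.vecMulLinear ∘ₗ A.vecMulLinear := by
      apply LinearMap.ext
      intro v
      simp [Matrix.vecMul_vecMul]
    have hmap : S = Submodule.map X.vecMulLinear (rowSpace A) := by
      rw [hS, rowSpace_eq_range, hcomp, LinearMap.range_comp, ← rowSpace_eq_range]
    have : Module.finrank Fq S = Module.finrank Fq (rowSpace A) := by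
      rw [hmap]
      exact (LinearEquiv.finrank_eq
        (Submodule.equivMapOfInjective X.vecMulLinear hXinj (rowSpace A))).symm
    rw [this, rowSpace]
    rw [Matrix.rank_eq_finrank_span_row] at hA
    exact hA
  -- U ≤ S ⊔ W0  and  S ≤ U ⊔ W0
  have hUle : U ≤ S ⊔ W0 := by
    rw [hU, rowSpace, Submodule.span_le]
    rintro - ⟨i, rfl⟩
    have : Y i = (A * X) i + (B * Z) i := by rw [hY]; rfl
    rw [this]
    exact Submodule.add_mem _
      (Submodule.mem_sup_left (Submodule.subset_span ⟨i, rfl⟩))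
      (Submodule.mem_sup_right (Submodule.subset_span ⟨i, rfl⟩))
  have hSle : S ≤ U ⊔ W0 := by
    rw [hS, rowSpace, Submodule.span_le]
    rintro - ⟨i, rfl⟩
    have : (A * X) i = Y i + (-1 : Fq) • (B * Z) i := by
      rw [hY]; ext j; simp
    rw [this]
    exact Submodule.add_mem _
      (Submodule.mem_sup_left (Submodule.subset_span ⟨i, rfl⟩))
      (Submodule.mem_sup_right (Submodule.smul_mem _ _ (Submodule.subset_span ⟨i, rfl⟩)))
  have hUleV : U ≤ V ⊔ W0 := le_trans hUle (sup_le_sup_right hSV _)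
  -- key dimension inequalities
  have key1 : Module.finrank Fq U ≤ Module.finrank Fq (U ⊓ V : Submodule Fq (Fin M → Fq)) + t :=
    le_trans (finrank_le_of_le_sup hUleV) (by omega)
  have key2 : Module.finrank Fq S ≤ Module.finrank Fq (U ⊓ V : Submodule Fq (Fin M → Fq)) + t := by
    have h1 := finrank_le_of_le_sup hSle
    have h2 : Module.finrank Fq (S ⊓ U : Submodule Fq (Fin M → Fq))
        ≤ Module.finrank Fq (U ⊓ V : Submodule Fq (Fin M → Fq)) :=
      Submodule.finrank_mono (le_inf inf_le_right (le_trans inf_le_left hSV))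
    omega
  -- triangle-type inequality
  have tri : Module.finrank Fq (U ⊓ V : Submodule Fq (Fin M → Fq))
      + Module.finrank Fq (U ⊓ V' : Submodule Fq (Fin M → Fq))
      ≤ Module.finrank Fq U + Module.finrank Fq (V ⊓ V' : Submodule Fq (Fin M → Fq)) := by
    have h1 := Submodule.finrank_sup_add_finrank_inf_eq (U ⊓ V) (U ⊓ V')
    have h2 : Module.finrank Fq ((U ⊓ V) ⊔ (U ⊓ V') : Submodule Fq (Fin M → Fq))
        ≤ Module.finrank Fq U :=
      Submodule.finrank_mono (sup_le inf_le_left inf_le_left)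
    have h3 : Module.finrank Fq ((U ⊓ V) ⊓ (U ⊓ V') : Submodule Fq (Fin M → Fq))
        ≤ Module.finrank Fq (V ⊓ V' : Submodule Fq (Fin M → Fq)) :=
      Submodule.finrank_mono (le_inf (le_trans inf_le_left inf_le_right)
        (le_trans inf_le_right inf_le_right))
    omega
  -- assemble all numeric facts
  have hdimV : Module.finrank Fq V = r + δ - 1 := hdim V hV
  have hdimV' : Module.finrank Fq V' = r + δ - 1 := hdim V' hV'
  have hVV' := hdist V hV V' hV' (Ne.symm hne)
  have haU : Module.finrank Fq (U ⊓ V : Submodule Fq (Fin M → Fq)) ≤ Module.finrank Fq U :=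
    Submodule.finrank_mono inf_le_left
  have haV : Module.finrank Fq (U ⊓ V : Submodule Fq (Fin M → Fq)) ≤ Module.finrank Fq V :=
    Submodule.finrank_mono inf_le_right
  have hbU : Module.finrank Fq (U ⊓ V' : Submodule Fq (Fin M → Fq)) ≤ Module.finrank Fq U :=
    Submodule.finrank_mono inf_le_left
  have hbV : Module.finrank Fq (U ⊓ V' : Submodule Fq (Fin M → Fq)) ≤ Module.finrank Fq V' :=
    Submodule.finrank_mono inf_le_right
  have hcV : Module.finrank Fq (V ⊓ V' : Submodule Fq (Fin M → Fq)) ≤ Module.finrank Fq V :=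
    Submodule.finrank_mono inf_le_left
  rw [subspaceDist] at hVV' ⊢
  rw [subspaceDist]
  rw [hdimV, hdimV'] at *
  omega
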